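/- Let (R,P_Ω) be a multiple Rota-Baxter algebra of pair weight (λ_Ω,λ_Ω) and X a set. Then there exists a free left (R,P_Ω)-module on X: a left (R,P_Ω)-module (F,𝔭_Ω) together with a map j : X → F such that for every left (R,P_Ω)-module (M,𝔪_Ω) and every set map φ : X → M there is a unique left (R,P_Ω)-module homomorphism φ̃ : F → M with φ̃ ∘ j = φ. -/
import Mathlib


universe u

/-- A left multiple Rota-Baxter module `(M, 𝔪_Ω)` over a multiple Rota-Baxter algebra
`(R, P_Ω)` of pair weight `(λ_Ω, λ_Ω)`: a left `R`-module (and `k`-module, compatibly)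
with a family of `k`-linear operators satisfying the multiple Rota-Baxter module
identity. -/
structure MRBModule (k R Ω : Type u) [CommRing k] [Ring R] [Algebra k R]
    (lam : Ω → k) (P : Ω → R →ₗ[k] R) : Type (u + 1) where
  carrier : Type u
  [isAddCommGroup : AddCommGroup carrier]
  [isModulek : Module k carrier]
  [isModuleR : Module R carrier]
  [isTower : IsScalarTower k R carrier]
  op : Ω → carrier →ₗ[k] carrier
  rb : ∀ (α β : Ω) (x : R) (m : carrier),
    P α x • op β m =
      op α (x • op β m) + op β (P α x • m)
        + lam β • op α (x • m) + lam α • op β (x • m)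

attribute [instance] MRBModule.isAddCommGroup MRBModule.isModulek
  MRBModule.isModuleR MRBModule.isTower


namespace MRBFree

inductive Pre (R Ω X : Type u) : Type u
  | of : X → Pre R Ω X
  | zero : Pre R Ω X
  | add : Pre R Ω X → Pre R Ω X → Pre R Ω X
  | neg : Pre R Ω X → Pre R Ω X
  | smul : R → Pre R Ω X → Pre R Ω X
  | op : Ω → Pre R Ω X → Pre R Ω X

variable {k R Ω X : Type u} [CommRing k] [Ring R] [Algebra k R]

inductive Rel (lam : Ω → k) (P : Ω → R →ₗ[k] R) : Pre R Ω X → Pre R Ω X → Prop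
  | refl (a) : Rel lam P a a
  | symm {a b} : Rel lam P a b → Rel lam P b a
  | trans {a b c} : Rel lam P a b → Rel lam P b c → Rel lam P a c
  | add_congr {a b c d} : Rel lam P a b → Rel lam P c d → Rel lam P (a.add c) (b.add d)
  | neg_congr {a b} : Rel lam P a b → Rel lam P a.neg b.neg
  | smul_congr (r) {a b} : Rel lam P a b → Rel lam P (a.smul r) (b.smul r)
  | op_congr (ω) {a b} : Rel lam P a b → Rel lam P (a.op ω) (b.op ω)
  | add_comm (a b : Pre R Ω X) : Rel lam P (a.add b) (b.add a)
  | add_assoc (a b c : Pre R Ω X) : Rel lam P ((a.add b).add c) (a.add (b.add c))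
  | zero_add (a : Pre R Ω X) : Rel lam P (Pre.zero.add a) a
  | neg_add (a : Pre R Ω X) : Rel lam P (a.neg.add a) Pre.zero
  | one_smul (a : Pre R Ω X) : Rel lam P (a.smul 1) a
  | mul_smul (r s : R) (a : Pre R Ω X) : Rel lam P (a.smul (r * s)) ((a.smul s).smul r)
  | smul_add (r : R) (a b : Pre R Ω X) : Rel lam P ((a.add b).smul r) ((a.smul r).add (b.smul r))
  | add_smul (r s : R) (a : Pre R Ω X) : Rel lam P (a.smul (r + s)) ((a.smul r).add (a.smul s))
  | zero_smul (a : Pre R Ω X) : Rel lam P (a.smul 0) Pre.zero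
  | smul_zero (r : R) : Rel lam P (Pre.zero.smul r) Pre.zero
  | op_add (ω : Ω) (a b : Pre R Ω X) : Rel lam P ((a.add b).op ω) ((a.op ω).add (b.op ω))
  | op_zero (ω) : Rel lam P ((Pre.zero : Pre R Ω X).op ω) Pre.zero
  | op_ksmul (ω : Ω) (c : k) (a : Pre R Ω X) :
      Rel lam P ((a.smul (algebraMap k R c)).op ω) ((a.op ω).smul (algebraMap k R c))
  | rb (α β : Ω) (x : R) (a : Pre R Ω X) :
      Rel lam P ((a.op β).smul (P α x))
        (((((((a.op β).smul x).op α).add ((a.smul (P α x)).op β)).add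
            (((a.smul x).op α).smul (algebraMap k R (lam β)))).add
          (((a.smul x).op β).smul (algebraMap k R (lam α)))))

variable (lam : Ω → k) (P : Ω → R →ₗ[k] R)

def Carrier := Quot (Rel (X := X) lam P)

variable {lam P}

def mk (a : Pre R Ω X) : Carrier (X := X) lam P := Quot.mk _ a

instance : Zero (Carrier (X := X) lam P) := ⟨mk Pre.zero⟩

instance : Add (Carrier (X := X) lam P) :=
  ⟨Quot.map₂ Pre.add (fun _ _ _ h => Rel.add_congr (Rel.refl _) h)
    (fun _ _ _ h => Rel.add_congr h (Rel.refl _))⟩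

instance : Neg (Carrier (X := X) lam P) :=
  ⟨Quot.map Pre.neg fun _ _ h => Rel.neg_congr h⟩

instance : SMul R (Carrier (X := X) lam P) :=
  ⟨fun r => Quot.map (Pre.smul r) fun _ _ h => Rel.smul_congr r h⟩

theorem mk_add (a b : Pre R Ω X) : (mk a + mk b : Carrier (X := X) lam P) = mk (a.add b) := rfl
theorem mk_smul (r : R) (a : Pre R Ω X) : (r • mk a : Carrier (X := X) lam P) = mk (a.smul r) := rfl

instance : AddCommGroup (Carrier (X := X) lam P) where
  add_assoc a b c := by
    induction a using Quot.ind; induction b using Quot.ind; induction c using Quot.ind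
    exact Quot.sound (Rel.add_assoc _ _ _)
  zero_add a := by
    induction a using Quot.ind; exact Quot.sound (Rel.zero_add _)
  add_zero a := by
    induction a using Quot.ind
    exact (Quot.sound (Rel.add_comm _ _)).trans (Quot.sound (Rel.zero_add _))
  add_comm a b := by
    induction a using Quot.ind; induction b using Quot.ind
    exact Quot.sound (Rel.add_comm _ _)
  neg_add_cancel a := by
    induction a using Quot.ind; exact Quot.sound (Rel.neg_add _)
  nsmul := nsmulRec
  zsmul := zsmulRec

instance : Module R (Carrier (X := X) lam P) where
  one_smul a := by induction a using Quot.ind; exact Quot.sound (Rel.one_smul _)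
  mul_smul r s a := by induction a using Quot.ind; exact Quot.sound (Rel.mul_smul _ _ _)
  smul_add r a b := by
    induction a using Quot.ind; induction b using Quot.ind
    exact Quot.sound (Rel.smul_add _ _ _)
  smul_zero r := Quot.sound (Rel.smul_zero _)
  add_smul r s a := by induction a using Quot.ind; exact Quot.sound (Rel.add_smul _ _ _)
  zero_smul a := by induction a using Quot.ind; exact Quot.sound (Rel.zero_smul _)

instance : Module k (Carrier (X := X) lam P) := Module.compHom _ (algebraMap k R)

instance : IsScalarTower k R (Carrier (X := X) lam P) :=
  ⟨fun a r m => by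
    show (a • r) • m = (algebraMap k R a) • r • m
    rw [Algebra.smul_def, mul_smul]⟩

def opL (ω : Ω) : Carrier (X := X) lam P →ₗ[k] Carrier (X := X) lam P where
  toFun := Quot.map (Pre.op ω) fun _ _ h => Rel.op_congr ω h
  map_add' a b := by
    induction a using Quot.ind; induction b using Quot.ind
    exact Quot.sound (Rel.op_add _ _ _)
  map_smul' c a := by
    induction a using Quot.ind
    exact Quot.sound (Rel.op_ksmul ω c _)

theorem mk_op (ω : Ω) (a : Pre R Ω X) : opL ω (mk a : Carrier (X := X) lam P) = mk (a.op ω) := rfl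

theorem rb_holds (α β : Ω) (x : R) (m : Carrier (X := X) lam P) :
    P α x • opL β m =
      opL α (x • opL β m) + opL β (P α x • m)
        + lam β • opL α (x • m) + lam α • opL β (x • m) := by
  induction m using Quot.ind
  exact Quot.sound (Rel.rb α β x _)

variable (M : MRBModule k R Ω lam P) (φ : X → M.carrier)

def eval : Pre R Ω X → M.carrier
  | .of x => φ x
  | .zero => 0
  | .add a b => eval a + eval b
  | .neg a => - eval a
  | .smul r a => r • eval a
  | .op ω a => M.op ω (eval a)

theorem eval_rel {a b : Pre R Ω X} (h : Rel lam P a b) : eval M φ a = eval M φ b := by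
  induction h with
  | refl _ => rfl
  | symm _ ih => exact ih.symm
  | trans _ _ ih₁ ih₂ => exact ih₁.trans ih₂
  | add_congr _ _ ih₁ ih₂ => simp [eval, ih₁, ih₂]
  | neg_congr _ ih => simp [eval, ih]
  | smul_congr r _ ih => simp [eval, ih]
  | op_congr ω _ ih => simp [eval, ih]
  | add_comm a b => simp [eval, add_comm]
  | add_assoc a b c => simp [eval, add_assoc]
  | zero_add a => simp [eval]
  | neg_add a => simp [eval]
  | one_smul a => simp [eval]
  | mul_smul r s a => simp [eval, mul_smul]
  | smul_add r a b => simp [eval, smul_add]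
  | add_smul r s a => simp [eval, add_smul]
  | zero_smul a => simp [eval]
  | smul_zero r => simp [eval]
  | op_add ω a b => simp [eval]
  | op_zero ω => simp [eval]
  | op_ksmul ω c a => simp [eval, algebraMap_smul]
  | rb α β x a =>
      show P α x • M.op β (eval M φ a) = _
      rw [M.rb α β x (eval M φ a)]
      simp [eval, algebraMap_smul]

def lift : Carrier (X := X) lam P →ₗ[R] M.carrier where
  toFun := Quot.lift (eval M φ) fun _ _ h => eval_rel M φ h
  map_add' a b := by induction a using Quot.ind; induction b using Quot.ind; rfl
  map_smul' r a := by induction a using Quot.ind; rfl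

end MRBFree

theorem exists_free_multiple_rota_baxter_module
    (k R Ω X : Type u) [CommRing k] [Ring R] [Algebra k R] [Nonempty Ω]
    (lam : Ω → k)
    (P : Ω → R →ₗ[k] R)
    (hP : ∀ (α β : Ω) (r₁ r₂ : R),
      P α r₁ * P β r₂ =
        P α (r₁ * P β r₂) + P β (P α r₁ * r₂)
          + lam β • P α (r₁ * r₂) + lam α • P β (r₁ * r₂)) :
    ∃ (F : MRBModule k R Ω lam P) (j : X → F.carrier),
      ∀ (M : MRBModule k R Ω lam P) (φ : X → M.carrier),
        ∃! φt : F.carrier →ₗ[R] M.carrier,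
          (∀ (ω : Ω) (u : F.carrier), φt (F.op ω u) = M.op ω (φt u)) ∧
          ∀ x : X, φt (j x) = φ x := by
  classical
  refine ⟨{ carrier := MRBFree.Carrier (X := X) lam P
            op := MRBFree.opL
            rb := MRBFree.rb_holds }, fun x => MRBFree.mk (.of x), ?_⟩
  intro M φ
  refine ⟨MRBFree.lift M φ, ⟨?_, fun x => rfl⟩, ?_⟩
  · intro ω u
    induction u using Quot.ind
    rfl
  · rintro ψ ⟨hop, hof⟩
    ext u
    induction u using Quot.ind with
    | _ t =>
      induction t with
      | of x => exact hof x
      | zero => exact (map_zero ψ).trans (map_zero (MRBFree.lift M φ)).symm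
      | add a b iha ihb =>
          show ψ (MRBFree.mk a + MRBFree.mk b) = MRBFree.lift M φ (MRBFree.mk a + MRBFree.mk b)
          rw [map_add, map_add]; exact congrArg₂ (· + ·) iha ihb
      | neg a ih =>
          show ψ (-(MRBFree.mk a)) = MRBFree.lift M φ (-(MRBFree.mk a))
          rw [map_neg, map_neg]; exact congrArg Neg.neg ih
      | smul r a ih =>
          show ψ (r • MRBFree.mk a) = MRBFree.lift M φ (r • MRBFree.mk a)
          rw [map_smul, map_smul]; exact congrArg (r • ·) ih
      | op ω a ih =>
          show ψ (MRBFree.opL ω (MRBFree.mk a)) = MRBFree.lift M φ (MRBFree.opL ω (MRBFree.mk a))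
          rw [hop]
          exact congrArg (M.op ω) ih
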